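/- Two lens spaces L(q; p₁,...,p_n) and L(q'; p'₁,...,p'_n) are isospectral if and only if their associated congruence lattices L₁, L₂ ⊂ ℤ^n satisfy N_{L₁}(s) = N_{L₂}(s) for all s ∈ ℕ, where N_L(s) = #{α ∈ L : ||α||₁ = s}. -/

import Mathlib

open MvPolynomial
open scoped Real

/-- The Laplacian `∑_j ∂_{z_j} ∂_{z̄_j}` in complex coordinates on `ℝ^{2n} ≅ ℂⁿ`
(variables `inl j ↦ z_j`, `inr j ↦ z̄_j`). -/
noncomputable def cxLaplacian (n : ℕ) :
    MvPolynomial (Fin n ⊕ Fin n) ℂ →ₗ[ℂ] MvPolynomial (Fin n ⊕ Fin n) ℂ :=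
  ∑ j : Fin n, (pderiv (Sum.inl j)).toLinearMap ∘ₗ (pderiv (Sum.inr j)).toLinearMap

/-- The substitution induced by the generator `g : z_j ↦ e^{2πi p_j/q} z_j` of `G`. -/
noncomputable def lensSubst (n q : ℕ) (p : Fin n → ℤ) :
    MvPolynomial (Fin n ⊕ Fin n) ℂ →ₐ[ℂ] MvPolynomial (Fin n ⊕ Fin n) ℂ :=
  aeval (Sum.elim
    (fun j : Fin n =>
      C (Complex.exp (2 * π * (p j : ℂ) / (q : ℂ) * Complex.I)) * X (Sum.inl j))
    (fun j : Fin n =>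
      C (Complex.exp (-(2 * π * (p j : ℂ) / (q : ℂ)) * Complex.I)) * X (Sum.inr j)))

/-- The space of `G`-invariant harmonic homogeneous polynomials of degree `k` on
`ℝ^{2n} ≅ ℂⁿ`; its dimension is the multiplicity of the `k`-th eigenvalue of the
Laplace–Beltrami operator on the lens space `L(q; p₁,…,pₙ) = S^{2n-1}/G`. -/
noncomputable def invariantHarmonics (n q : ℕ) (p : Fin n → ℤ) (k : ℕ) :
    Submodule ℂ (MvPolynomial (Fin n ⊕ Fin n) ℂ) :=
  homogeneousSubmodule (Fin n ⊕ Fin n) ℂ k ⊓ LinearMap.ker (cxLaplacian n)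
    ⊓ LinearMap.ker ((lensSubst n q p).toLinearMap - LinearMap.id)

/-- `N_L(s)`: the number of points of the congruence lattice `L` of `ℓ¹`-norm `s`. -/
noncomputable def latticeCount (n q : ℕ) (p : Fin n → ℤ) (s : ℕ) : ℕ :=
  Set.ncard {α : Fin n → ℤ |
    ((q : ℤ) ∣ ∑ j : Fin n, α j * p j) ∧ ∑ j : Fin n, (α j).natAbs = s}

namespace LensAux

variable (n q : ℕ) (p : Fin n → ℤ)

/-- good exponents of degree `k` -/
def goodSet (k : ℕ) : Set ((Fin n ⊕ Fin n) →₀ ℕ) :=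
  {d | ((q:ℤ) ∣ ∑ j, ((d (Sum.inl j) : ℤ) - (d (Sum.inr j) : ℤ)) * p j) ∧ (∑ i, d i) = k}

lemma goodSet_finite (k : ℕ) : (goodSet n q p k).Finite := by
  have h1 : (goodSet n q p k) ⊆
      (fun d : (Fin n ⊕ Fin n) →₀ ℕ => (d : (Fin n ⊕ Fin n) → ℕ)) ⁻¹'
        (Set.univ.pi fun _ => Set.Iic k) := by
    rintro d ⟨-, hd⟩ i -
    exact hd ▸ Finset.single_le_sum (f := fun i => d i) (fun _ _ => Nat.zero_le _)
      (Finset.mem_univ i)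
  refine Set.Finite.subset (Set.Finite.preimage ?_ ?_) h1
  · exact Function.Injective.injOn (DFunLike.coe_injective)
  · exact Set.Finite.pi fun _ => Set.finite_Iic k

/-- invariant polynomials supported in degree-`k` good monomials -/
noncomputable def Vspace (k : ℕ) : Submodule ℂ (MvPolynomial (Fin n ⊕ Fin n) ℂ) where
  carrier := {f | ∀ d, coeff d f ≠ 0 → d ∈ goodSet n q p k}
  add_mem' := by
    intro a b ha hb d hd
    rw [coeff_add] at hd
    by_cases h : coeff d a = 0
    · exact hb d (by simpa [h] using hd)
    · exact ha d h
  zero_mem' := by intro d hd; simp at hd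
  smul_mem' := by
    intro c f hf d hd
    rw [coeff_smul] at hd
    exact hf d (by intro h; simp [h] at hd)

lemma mem_Vspace {k : ℕ} {f : MvPolynomial (Fin n ⊕ Fin n) ℂ} :
    f ∈ Vspace n q p k ↔ ∀ d, coeff d f ≠ 0 → d ∈ goodSet n q p k := Iff.rfl

lemma monomial_mem_Vspace {k : ℕ} {d : (Fin n ⊕ Fin n) →₀ ℕ} (hd : d ∈ goodSet n q p k)
    (c : ℂ) : monomial d c ∈ Vspace n q p k := by
  intro u hu
  rw [coeff_monomial] at hu
  split at hu
  · next h => exact h ▸ hd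
  · exact absurd rfl hu

lemma Vspace_eq_span (k : ℕ) :
    Vspace n q p k = Submodule.span ℂ ((fun d => monomial d (1:ℂ)) '' goodSet n q p k) := by
  apply le_antisymm
  · intro f hf
    rw [f.as_sum]
    refine Submodule.sum_mem _ fun d hd => ?_
    have : monomial d (coeff d f) = coeff d f • monomial d (1:ℂ) := by
      simp [smul_monomial]
    rw [this]
    exact Submodule.smul_mem _ _ (Submodule.subset_span
      ⟨d, hf d (by simpa using hd), rfl⟩)
  · rw [Submodule.span_le]
    rintro - ⟨d, hd, rfl⟩
    exact monomial_mem_Vspace n q p hd 1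

lemma finrank_Vspace (k : ℕ) :
    Module.finrank ℂ (Vspace n q p k) = (goodSet n q p k).ncard := by
  classical
  have hfin := goodSet_finite n q p k
  haveI : Fintype (goodSet n q p k) := hfin.fintype
  set v : goodSet n q p k → MvPolynomial (Fin n ⊕ Fin n) ℂ :=
    fun d => monomial (d : (Fin n ⊕ Fin n) →₀ ℕ) (1:ℂ) with hv
  have hvli : LinearIndependent ℂ v := by
    have := (basisMonomials (Fin n ⊕ Fin n) ℂ).linearIndependent
    have h2 := this.comp (fun d : goodSet n q p k => (d : (Fin n ⊕ Fin n) →₀ ℕ))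
      Subtype.val_injective
    rw [coe_basisMonomials] at h2
    exact h2
  have hrange : Set.range v = (fun d => monomial d (1:ℂ)) '' goodSet n q p k := by
    rw [hv]
    ext x
    simp [Set.mem_image]
  haveI : Fintype (Set.range v) := Set.fintypeRange v
  have h3 : Module.finrank ℂ (Submodule.span ℂ (Set.range v)) = (Set.range v).toFinset.card :=
    finrank_span_set_eq_card hvli.linearIndepOn_id
  rw [Vspace_eq_span, ← hrange, h3]
  have hinj : Function.Injective v := by
    intro a b hab
    have := (monomial_left_injective (one_ne_zero (α := ℂ))) hab
    exact Subtype.ext this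
  rw [← Set.ncard_eq_toFinset_card', ← Nat.card_coe_set_eq, ← Nat.card_coe_set_eq]
  exact Nat.card_range_of_injective hinj


variable (n q : ℕ) (p : Fin n → ℤ)

/-- eigenvalue of the generator on a single variable -/
noncomputable def egen : (Fin n ⊕ Fin n) → ℂ :=
  Sum.elim (fun j => Complex.exp (2 * π * (p j : ℂ) / (q : ℂ) * Complex.I))
    (fun j => Complex.exp (-(2 * π * (p j : ℂ) / (q : ℂ)) * Complex.I))

/-- eigenvalue of the generator on the monomial `d` -/
noncomputable def lam (d : (Fin n ⊕ Fin n) →₀ ℕ) : ℂ :=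
  ∏ i : Fin n ⊕ Fin n, egen n q p i ^ d i

/-- the integer `∑ (aⱼ - bⱼ) pⱼ` attached to a monomial -/
def wt (d : (Fin n ⊕ Fin n) →₀ ℕ) : ℤ :=
  ∑ j : Fin n, ((d (Sum.inl j) : ℤ) - (d (Sum.inr j) : ℤ)) * p j

lemma lam_eq_exp (d : (Fin n ⊕ Fin n) →₀ ℕ) :
    lam n q p d = Complex.exp (2 * π / (q : ℂ) * (wt n p d : ℂ) * Complex.I) := by
  rw [lam, Fintype.prod_sum_type]
  simp only [egen, Sum.elim_inl, Sum.elim_inr, ← Complex.exp_nat_mul, ← Complex.exp_sum]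
  rw [← Complex.exp_add]
  congr 1
  rw [wt]
  push_cast
  rw [← Finset.sum_add_distrib, Finset.mul_sum, Finset.sum_mul]
  exact Finset.sum_congr rfl fun j _ => by ring

lemma lam_eq_one_iff (hq : 0 < q) (d : (Fin n ⊕ Fin n) →₀ ℕ) :
    lam n q p d = 1 ↔ (q : ℤ) ∣ wt n p d := by
  rw [lam_eq_exp, Complex.exp_eq_one_iff]
  have hq' : (q : ℂ) ≠ 0 := Nat.cast_ne_zero.mpr hq.ne'
  have hπ : (π : ℂ) ≠ 0 := by exact_mod_cast Real.pi_ne_zero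
  have hI : (2 : ℂ) * π * Complex.I ≠ 0 := by
    simp [Complex.I_ne_zero, hπ]
  constructor
  · rintro ⟨m, hm⟩
    refine ⟨m, ?_⟩
    field_simp at hm
    have h2 : (wt n p d : ℂ) * (2 * π * Complex.I)
        = ((q * m : ℤ) : ℂ) * (2 * π * Complex.I) := by
      push_cast
      linear_combination (2 * π * Complex.I) * hm
    have h3 := mul_right_cancel₀ hI h2
    exact_mod_cast h3
  · rintro ⟨m, hm⟩
    refine ⟨m, ?_⟩
    rw [hm]
    push_cast
    field_simp

lemma lensSubst_eq_aeval :
    lensSubst n q p = aeval (fun i => C (egen n q p i) * X i) := by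
  unfold lensSubst egen
  congr 1
  ext i
  cases i <;> simp

lemma lensSubst_monomial (d : (Fin n ⊕ Fin n) →₀ ℕ) (c : ℂ) :
    lensSubst n q p (monomial d c) = lam n q p d • monomial d c := by
  rw [lensSubst_eq_aeval, aeval_monomial]
  have h1 : (d.prod fun i e => (C (egen n q p i) * X i) ^ e)
      = C (∏ i ∈ d.support, egen n q p i ^ d i) * d.prod fun i e => (X i : MvPolynomial (Fin n ⊕ Fin n) ℂ) ^ e := by
    rw [Finsupp.prod, Finsupp.prod]
    simp only [mul_pow, ← map_pow]
    rw [Finset.prod_mul_distrib, map_prod]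
  have h2 : (∏ i ∈ d.support, egen n q p i ^ d i) = lam n q p d := by
    rw [lam]
    refine Finset.prod_subset (Finset.subset_univ _) ?_
    intro i _ hi
    rw [Finsupp.notMem_support_iff] at hi
    simp [hi]
  rw [h1, h2, monomial_eq]
  rw [algebraMap_eq]
  rw [smul_eq_C_mul]
  ring

lemma coeff_lensSubst (f : MvPolynomial (Fin n ⊕ Fin n) ℂ) (d : (Fin n ⊕ Fin n) →₀ ℕ) :
    coeff d (lensSubst n q p f) = lam n q p d * coeff d f := by
  conv_lhs => rw [f.as_sum]
  rw [map_sum]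
  simp only [lensSubst_monomial]
  rw [coeff_sum, Finset.sum_eq_single d]
  · rw [coeff_smul, coeff_monomial, if_pos rfl, smul_eq_mul]
  · intro u _ hud
    rw [coeff_smul, coeff_monomial, if_neg hud, smul_zero]
  · intro hd
    rw [MvPolynomial.notMem_support_iff] at hd
    simp [coeff_smul, coeff_monomial, hd]

end LensAux

namespace LensAux

variable (n q : ℕ) (p : Fin n → ℤ)

lemma weight_eq_sum_univ (d : (Fin n ⊕ Fin n) →₀ ℕ) :
    (Finsupp.weight (1 : (Fin n ⊕ Fin n) → ℕ) d : ℕ) = ∑ i, d i := by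
  rw [show (1 : (Fin n ⊕ Fin n) → ℕ) = fun _ => 1 from rfl, ← Finsupp.degree_eq_weight_one,
    Finsupp.degree_apply]
  exact Finset.sum_subset (Finset.subset_univ _) (fun i _ hi => Finsupp.notMem_support_iff.mp hi)

lemma homogInfKer (hq : 0 < q) (k : ℕ) :
    (homogeneousSubmodule (Fin n ⊕ Fin n) ℂ k ⊓
      LinearMap.ker ((lensSubst n q p).toLinearMap - LinearMap.id)) = Vspace n q p k := by
  ext f
  simp only [Submodule.mem_inf, mem_homogeneousSubmodule, LinearMap.mem_ker,
    LinearMap.sub_apply, AlgHom.toLinearMap_apply, LinearMap.id_apply, sub_eq_zero,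
    mem_Vspace]
  constructor
  · rintro ⟨hhom, hfix⟩ d hd
    constructor
    · have h1 := congrArg (coeff d) hfix
      rw [coeff_lensSubst] at h1
      have hlam : lam n q p d = 1 := by
        have := mul_right_cancel₀ hd (h1.trans (one_mul _).symm)
        exact this
      exact (lam_eq_one_iff n q p hq d).mp hlam
    · have h2 := hhom hd
      rw [← weight_eq_sum_univ]
      exact h2
  · intro hf
    constructor
    · intro d hd
      rw [weight_eq_sum_univ]
      exact (hf d hd).2
    · apply MvPolynomial.ext
      intro d
      rw [coeff_lensSubst]
      by_cases hd : coeff d f = 0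
      · rw [hd, mul_zero]
      · rw [(lam_eq_one_iff n q p hq d).mpr (hf d hd).1, one_mul]





lemma cxLaplacian_apply (f : MvPolynomial (Fin n ⊕ Fin n) ℂ) :
    cxLaplacian n f = ∑ j, pderiv (Sum.inl j) (pderiv (Sum.inr j) f) := by
  rw [cxLaplacian, LinearMap.sum_apply]
  rfl

lemma sum_single_apply (i : Fin n ⊕ Fin n) :
    ∑ t, (Finsupp.single i 1 : (Fin n ⊕ Fin n) →₀ ℕ) t = 1 := by
  simp [Finsupp.single_apply]

lemma sum_sub_single (d : (Fin n ⊕ Fin n) →₀ ℕ) (i : Fin n ⊕ Fin n) (hi : d i ≠ 0) :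
    ∑ t, (d - Finsupp.single i 1 : (Fin n ⊕ Fin n) →₀ ℕ) t = (∑ t, d t) - 1 := by
  have h1 : ∀ t, (d - Finsupp.single i 1 : (Fin n ⊕ Fin n) →₀ ℕ) t
      = d t - (Finsupp.single i 1) t := fun t => Finsupp.tsub_apply d _ t
  simp only [h1]
  rw [← Finset.add_sum_erase _ _ (Finset.mem_univ i),
    ← Finset.add_sum_erase _ (fun t => d t) (Finset.mem_univ i)]
  have h2 : ∑ t ∈ Finset.univ.erase i, (d t - (Finsupp.single i 1) t)
      = ∑ t ∈ Finset.univ.erase i, d t := by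
    refine Finset.sum_congr rfl fun t ht => ?_
    rw [Finsupp.single_apply, if_neg (Ne.symm (Finset.ne_of_mem_erase ht)), Nat.sub_zero]
  rw [h2, Finsupp.single_apply, if_pos rfl]
  have h3 : 1 ≤ d i := Nat.one_le_iff_ne_zero.mpr hi
  omega

/-- Euler's identity for monomials -/
lemma euler_monomial (d : (Fin n ⊕ Fin n) →₀ ℕ) (c : ℂ) :
    ∑ i, X i * pderiv i (monomial d c) = (∑ i, d i) • monomial d c := by
  have key : ∀ i : Fin n ⊕ Fin n,
      X i * pderiv i (monomial d c) = (d i) • monomial d c := by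
    intro i
    rw [pderiv_monomial]
    by_cases hi : d i = 0
    · simp [hi]
    · have hX : (X i : MvPolynomial (Fin n ⊕ Fin n) ℂ) = monomial (Finsupp.single i 1) 1 := rfl
      rw [hX, monomial_mul, one_mul]
      have hd : Finsupp.single i 1 + (d - Finsupp.single i 1) = d := by
        ext t
        rw [Finsupp.add_apply, Finsupp.tsub_apply, Finsupp.single_apply]
        by_cases ht : i = t
        · subst ht; simpa using by omega
        · simp [ht]
      rw [hd, smul_monomial, nsmul_eq_mul, mul_comm]
  rw [Finset.sum_congr rfl fun i _ => key i, ← Finset.sum_smul]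

lemma weight_eq_sum_univ' (d : (Fin n ⊕ Fin n) →₀ ℕ) :
    (Finsupp.weight (1 : (Fin n ⊕ Fin n) → ℕ) d : ℕ) = ∑ i, d i := by
  rw [show (1 : (Fin n ⊕ Fin n) → ℕ) = fun _ => 1 from rfl, ← Finsupp.degree_eq_weight_one,
    Finsupp.degree_apply]
  exact Finset.sum_subset (Finset.subset_univ _) (fun i _ hi => Finsupp.notMem_support_iff.mp hi)

lemma euler {k : ℕ} {f : MvPolynomial (Fin n ⊕ Fin n) ℂ} (hf : f.IsHomogeneous k) :
    ∑ i, X i * pderiv i f = k • f := by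
  conv_lhs => rw [f.as_sum]
  simp only [map_sum, Finset.mul_sum]
  rw [Finset.sum_comm]
  have key : ∀ v ∈ f.support, ∑ i, X i * pderiv i (monomial v (coeff v f))
      = k • monomial v (coeff v f) := by
    intro v hv
    rw [euler_monomial]
    have h2 := hf (MvPolynomial.mem_support_iff.mp hv)
    rw [← weight_eq_sum_univ' n v, h2]
  rw [Finset.sum_congr rfl key, ← Finset.smul_sum, ← f.as_sum]



lemma Vspace_isHomog {k : ℕ} {f : MvPolynomial (Fin n ⊕ Fin n) ℂ}
    (hf : f ∈ Vspace n q p k) : f.IsHomogeneous k := by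
  intro d hd
  rw [weight_eq_sum_univ]
  exact (hf d hd).2

lemma pp_monomial (j : Fin n) (d : (Fin n ⊕ Fin n) →₀ ℕ) (c : ℂ) :
    pderiv (Sum.inl j) (pderiv (Sum.inr j) (monomial d c)) =
      monomial (d - Finsupp.single (Sum.inr j) 1 - Finsupp.single (Sum.inl j) 1)
        (c * d (Sum.inr j) * d (Sum.inl j)) := by
  have he : (d - Finsupp.single (Sum.inr j) 1 : (Fin n ⊕ Fin n) →₀ ℕ) (Sum.inl j)
      = d (Sum.inl j) := by
    rw [Finsupp.tsub_apply, Finsupp.single_apply, if_neg (by simp), Nat.sub_zero]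
  rw [pderiv_monomial, pderiv_monomial, he]

lemma cxLaplacian_monomial (d : (Fin n ⊕ Fin n) →₀ ℕ) (c : ℂ) :
    cxLaplacian n (monomial d c) =
      ∑ j, monomial (d - Finsupp.single (Sum.inr j) 1 - Finsupp.single (Sum.inl j) 1)
        (c * d (Sum.inr j) * d (Sum.inl j)) := by
  rw [cxLaplacian_apply]
  exact Finset.sum_congr rfl fun j _ => pp_monomial n j d c

lemma delta_monomial_mem (k : ℕ) {d : (Fin n ⊕ Fin n) →₀ ℕ}
    (hd : d ∈ goodSet n q p (k+2)) (c : ℂ) :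
    cxLaplacian n (monomial d c) ∈ Vspace n q p k := by
  rw [cxLaplacian_monomial]
  refine Submodule.sum_mem _ fun j _ => ?_
  by_cases h0 : d (Sum.inr j) = 0
  · simp [h0]
  by_cases h1 : d (Sum.inl j) = 0
  · simp [h1]
  refine monomial_mem_Vspace n q p ⟨?_, ?_⟩ _
  · -- divisibility unchanged
    have key : ∀ j' : Fin n,
        (((d - Finsupp.single (Sum.inr j) 1 - Finsupp.single (Sum.inl j) 1 :
            (Fin n ⊕ Fin n) →₀ ℕ) (Sum.inl j') : ℤ)
          - ((d - Finsupp.single (Sum.inr j) 1 - Finsupp.single (Sum.inl j) 1 :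
            (Fin n ⊕ Fin n) →₀ ℕ) (Sum.inr j') : ℤ))
        = ((d (Sum.inl j') : ℤ) - (d (Sum.inr j') : ℤ)) := by
      intro j'
      have hll : (Finsupp.single (Sum.inl j) 1 : (Fin n ⊕ Fin n) →₀ ℕ) (Sum.inl j')
          = if j = j' then 1 else 0 := by simp [Finsupp.single_apply]
      have hrl : (Finsupp.single (Sum.inr j) 1 : (Fin n ⊕ Fin n) →₀ ℕ) (Sum.inl j') = 0 := by
        simp [Finsupp.single_apply]
      have hlr : (Finsupp.single (Sum.inl j) 1 : (Fin n ⊕ Fin n) →₀ ℕ) (Sum.inr j') = 0 := by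
        simp [Finsupp.single_apply]
      have hrr : (Finsupp.single (Sum.inr j) 1 : (Fin n ⊕ Fin n) →₀ ℕ) (Sum.inr j')
          = if j = j' then 1 else 0 := by simp [Finsupp.single_apply]
      rw [Finsupp.tsub_apply, Finsupp.tsub_apply, Finsupp.tsub_apply, Finsupp.tsub_apply,
        hll, hrl, hlr, hrr]
      by_cases hj : j = j'
      · subst hj
        rw [if_pos rfl]
        omega
      · rw [if_neg hj]
        omega
    have hsum : (∑ j', (((d - Finsupp.single (Sum.inr j) 1 - Finsupp.single (Sum.inl j) 1 :
            (Fin n ⊕ Fin n) →₀ ℕ) (Sum.inl j') : ℤ)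
          - ((d - Finsupp.single (Sum.inr j) 1 - Finsupp.single (Sum.inl j) 1 :
            (Fin n ⊕ Fin n) →₀ ℕ) (Sum.inr j') : ℤ)) * p j')
        = ∑ j', ((d (Sum.inl j') : ℤ) - (d (Sum.inr j') : ℤ)) * p j' :=
      Finset.sum_congr rfl fun j' _ => by rw [key j']
    rw [hsum]
    exact hd.1
  · -- degree drops by 2
    have h2 : (d - Finsupp.single (Sum.inr j) 1 : (Fin n ⊕ Fin n) →₀ ℕ) (Sum.inl j)
        = d (Sum.inl j) := by
      rw [Finsupp.tsub_apply, Finsupp.single_apply, if_neg (by simp), Nat.sub_zero]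
    rw [sum_sub_single n _ _ (by rw [h2]; exact h1), sum_sub_single n _ _ h0, hd.2]
    omega

lemma delta_mem (k : ℕ) {f : MvPolynomial (Fin n ⊕ Fin n) ℂ}
    (hf : f ∈ Vspace n q p (k+2)) : cxLaplacian n f ∈ Vspace n q p k := by
  rw [Vspace_eq_span] at hf
  have h2 : cxLaplacian n f ∈ Submodule.map (cxLaplacian n)
      (Submodule.span ℂ ((fun d => monomial d (1:ℂ)) '' goodSet n q p (k+2))) :=
    Submodule.mem_map_of_mem hf
  rw [Submodule.map_span] at h2
  refine Submodule.span_le.mpr ?_ h2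
  rintro - ⟨-, ⟨d, hd, rfl⟩, rfl⟩
  exact delta_monomial_mem n q p k hd 1

lemma delta_zero {k : ℕ} (hk : k ≤ 1) {f : MvPolynomial (Fin n ⊕ Fin n) ℂ}
    (hf : f ∈ Vspace n q p k) : cxLaplacian n f = 0 := by
  conv_lhs => rw [f.as_sum]
  rw [map_sum]
  refine Finset.sum_eq_zero fun d hd => ?_
  rw [cxLaplacian_monomial]
  refine Finset.sum_eq_zero fun j _ => ?_
  have hdeg : ∑ t, d t = k := (hf d (MvPolynomial.mem_support_iff.mp hd)).2
  have hle : d (Sum.inl j) + d (Sum.inr j) ≤ ∑ t, d t := by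
    have := Finset.sum_le_sum_of_subset
      (Finset.subset_univ ({Sum.inl j, Sum.inr j} : Finset (Fin n ⊕ Fin n)))
      (f := fun t => d t)
    rwa [Finset.sum_pair (by simp : (Sum.inl j : Fin n ⊕ Fin n) ≠ Sum.inr j)] at this
  have : d (Sum.inr j) * d (Sum.inl j) = 0 := by
    rcases Nat.eq_zero_or_pos (d (Sum.inr j)) with h | h
    · rw [h, zero_mul]
    · have : d (Sum.inl j) = 0 := by omega
      rw [this, mul_zero]
  rw [mul_assoc, ← Nat.cast_mul, this]
  simp


/-- `r² = ∑ z_j z̄_j` -/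
noncomputable def R2 (n : ℕ) : MvPolynomial (Fin n ⊕ Fin n) ℂ :=
  ∑ j, X (Sum.inl j) * X (Sum.inr j)

lemma R2_mul_monomial (d : (Fin n ⊕ Fin n) →₀ ℕ) (c : ℂ) :
    R2 n * monomial d c
      = ∑ j, monomial (d + Finsupp.single (Sum.inl j) 1 + Finsupp.single (Sum.inr j) 1) c := by
  rw [R2, Finset.sum_mul]
  refine Finset.sum_congr rfl fun j _ => ?_
  have hXl : (X (Sum.inl j) : MvPolynomial (Fin n ⊕ Fin n) ℂ)
      = monomial (Finsupp.single (Sum.inl j) 1) 1 := rfl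
  have hXr : (X (Sum.inr j) : MvPolynomial (Fin n ⊕ Fin n) ℂ)
      = monomial (Finsupp.single (Sum.inr j) 1) 1 := rfl
  rw [hXl, hXr, monomial_mul, monomial_mul, one_mul, one_mul]
  have he : (Finsupp.single (Sum.inl j) 1 + Finsupp.single (Sum.inr j) 1 + d
      : (Fin n ⊕ Fin n) →₀ ℕ) = d + Finsupp.single (Sum.inl j) 1 + Finsupp.single (Sum.inr j) 1 := by
    ext t
    simp only [Finsupp.add_apply]
    omega
  rw [he]

lemma R2_monomial_mem (k : ℕ) {d : (Fin n ⊕ Fin n) →₀ ℕ}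
    (hd : d ∈ goodSet n q p k) (c : ℂ) :
    R2 n * monomial d c ∈ Vspace n q p (k+2) := by
  rw [R2_mul_monomial]
  refine Submodule.sum_mem _ fun j _ => ?_
  refine monomial_mem_Vspace n q p ⟨?_, ?_⟩ _
  · have key : ∀ j' : Fin n,
        (((d + Finsupp.single (Sum.inl j) 1 + Finsupp.single (Sum.inr j) 1 :
            (Fin n ⊕ Fin n) →₀ ℕ) (Sum.inl j') : ℤ)
          - ((d + Finsupp.single (Sum.inl j) 1 + Finsupp.single (Sum.inr j) 1 :
            (Fin n ⊕ Fin n) →₀ ℕ) (Sum.inr j') : ℤ))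
        = ((d (Sum.inl j') : ℤ) - (d (Sum.inr j') : ℤ)) := by
      intro j'
      simp only [Finsupp.add_apply, Finsupp.single_apply]
      by_cases hj : j = j'
      · subst hj; simp
      · simp [hj, Sum.inl.injEq, Sum.inr.injEq]
    have hsum : (∑ j', (((d + Finsupp.single (Sum.inl j) 1 + Finsupp.single (Sum.inr j) 1 :
            (Fin n ⊕ Fin n) →₀ ℕ) (Sum.inl j') : ℤ)
          - ((d + Finsupp.single (Sum.inl j) 1 + Finsupp.single (Sum.inr j) 1 :
            (Fin n ⊕ Fin n) →₀ ℕ) (Sum.inr j') : ℤ)) * p j')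
        = ∑ j', ((d (Sum.inl j') : ℤ) - (d (Sum.inr j') : ℤ)) * p j' :=
      Finset.sum_congr rfl fun j' _ => by rw [key j']
    rw [hsum]
    exact hd.1
  · simp only [Finsupp.add_apply, Finset.sum_add_distrib, sum_single_apply, hd.2]


lemma R2_mul_mem {k : ℕ} {f : MvPolynomial (Fin n ⊕ Fin n) ℂ}
    (hf : f ∈ Vspace n q p k) : R2 n * f ∈ Vspace n q p (k+2) := by
  rw [Vspace_eq_span] at hf
  have h2 : R2 n * f ∈ Submodule.map (LinearMap.mulLeft ℂ (R2 n))
      (Submodule.span ℂ ((fun d => monomial d (1:ℂ)) '' goodSet n q p k)) :=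
    Submodule.mem_map_of_mem hf
  rw [Submodule.map_span] at h2
  refine Submodule.span_le.mpr ?_ h2
  rintro - ⟨-, ⟨d, hd, rfl⟩, rfl⟩
  exact R2_monomial_mem n q p k hd 1

lemma R2_pow_mul_mem (j : ℕ) {k : ℕ} {f : MvPolynomial (Fin n ⊕ Fin n) ℂ}
    (hf : f ∈ Vspace n q p k) : (R2 n)^j * f ∈ Vspace n q p (k + 2*j) := by
  induction j with
  | zero => simpa using hf
  | succ j ih =>
    have h1 : (R2 n)^(j+1) * f = R2 n * ((R2 n)^j * f) := by ring
    rw [h1, show k + 2*(j+1) = (k + 2*j) + 2 from by omega]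
    exact R2_mul_mem n q p ih

lemma pderiv_inr_R2 (j : Fin n) : pderiv (Sum.inr j) (R2 n) = X (Sum.inl j) := by
  rw [R2, map_sum, Finset.sum_eq_single j]
  · rw [pderiv_mul, pderiv_X_of_ne (by simp), pderiv_X_self, zero_mul, mul_one, zero_add]
  · intro b _ hb
    rw [pderiv_mul, pderiv_X_of_ne (by simp), pderiv_X_of_ne (by simp [hb]), zero_mul,
      mul_zero, zero_add]
  · intro h
    exact absurd (Finset.mem_univ j) h

lemma pderiv_inl_R2 (j : Fin n) : pderiv (Sum.inl j) (R2 n) = X (Sum.inr j) := by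
  rw [R2, map_sum, Finset.sum_eq_single j]
  · rw [pderiv_mul, pderiv_X_self, pderiv_X_of_ne (by simp), one_mul, mul_zero, add_zero]
  · intro b _ hb
    rw [pderiv_mul, pderiv_X_of_ne (by simp [hb]), pderiv_X_of_ne (by simp), zero_mul,
      mul_zero, zero_add]
  · intro h
    exact absurd (Finset.mem_univ j) h

lemma comm_basic {k : ℕ} {f : MvPolynomial (Fin n ⊕ Fin n) ℂ} (hf : f.IsHomogeneous k) :
    cxLaplacian n (R2 n * f) = (n + k) • f + R2 n * cxLaplacian n f := by
  rw [cxLaplacian_apply]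
  have step : ∀ j, pderiv (Sum.inl j) (pderiv (Sum.inr j) (R2 n * f))
      = f + X (Sum.inl j) * pderiv (Sum.inl j) f + X (Sum.inr j) * pderiv (Sum.inr j) f
        + R2 n * pderiv (Sum.inl j) (pderiv (Sum.inr j) f) := by
    intro j
    rw [pderiv_mul, pderiv_inr_R2, map_add, pderiv_mul, pderiv_mul, pderiv_inl_R2,
      pderiv_X_self]
    ring
  rw [Finset.sum_congr rfl fun j _ => step j, Finset.sum_add_distrib, Finset.sum_add_distrib,
    Finset.sum_add_distrib, Finset.sum_const, Finset.card_univ, Fintype.card_fin,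
    ← Finset.mul_sum, ← cxLaplacian_apply]
  have he := euler n hf
  rw [Fintype.sum_sum_type] at he
  rw [add_nsmul]
  rw [← he]
  abel

lemma comm_pow (hn : 0 < n) : ∀ (j m : ℕ) (w : MvPolynomial (Fin n ⊕ Fin n) ℂ),
    w ∈ Vspace n q p m →
    ∃ c : ℕ, 0 < c ∧ cxLaplacian n ((R2 n)^(j+1) * w)
      = c • ((R2 n)^j * w) + (R2 n)^(j+1) * cxLaplacian n w := by
  intro j
  induction j with
  | zero =>
    intro m w hw
    refine ⟨n + m, by omega, ?_⟩
    simpa [pow_one, pow_zero, one_mul] using comm_basic n (Vspace_isHomog n q p hw)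
  | succ j ih =>
    intro m w hw
    obtain ⟨c, hc, hcomm⟩ := ih m w hw
    have hu : (R2 n)^(j+1) * w ∈ Vspace n q p (m + 2*(j+1)) := R2_pow_mul_mem n q p (j+1) hw
    have hbasic := comm_basic n (Vspace_isHomog n q p hu)
    refine ⟨(n + (m + 2*(j+1))) + c, by omega, ?_⟩
    have h1 : (R2 n)^(j+1+1) * w = R2 n * ((R2 n)^(j+1) * w) := by ring
    rw [h1, hbasic, hcomm]
    have h2 : R2 n * (c • ((R2 n)^j * w) + (R2 n)^(j+1) * cxLaplacian n w)
        = c • ((R2 n)^(j+1) * w) + (R2 n)^(j+1+1) * cxLaplacian n w := by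
      rw [mul_add, mul_smul_comm]
      congr 1
      · congr 1
        ring
      · ring
    rw [h2, add_nsmul, add_nsmul]
    module


lemma surj_aux (hn : 0 < n) (k : ℕ) : ∀ m, ∀ j, m + 2*j = k →
    ∀ w ∈ Vspace n q p m, ∃ f ∈ Vspace n q p (k+2), cxLaplacian n f = (R2 n)^j * w := by
  intro m
  induction m using Nat.strong_induction_on with
  | _ m IH =>
    intro j hj w hw
    by_cases hm : m ≤ 1
    · have hΔ : cxLaplacian n w = 0 := delta_zero n q p hm hw
      obtain ⟨c, hc, hcomm⟩ := comm_pow n q p hn j m w hw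
      rw [hΔ, mul_zero, add_zero] at hcomm
      refine ⟨(c:ℂ)⁻¹ • ((R2 n)^(j+1) * w), ?_, ?_⟩
      · have h1 := R2_pow_mul_mem n q p (j+1) hw
        rw [show m + 2*(j+1) = k + 2 from by omega] at h1
        exact Submodule.smul_mem _ _ h1
      · rw [map_smul, hcomm, ← Nat.cast_smul_eq_nsmul ℂ c, smul_smul,
          inv_mul_cancel₀ (Nat.cast_ne_zero.mpr hc.ne'), one_smul]
    · push_neg at hm
      obtain ⟨m', rfl⟩ : ∃ m', m = m' + 2 := ⟨m - 2, by omega⟩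
      have hΔw : cxLaplacian n w ∈ Vspace n q p m' := delta_mem n q p m' hw
      obtain ⟨f₁, hf₁, hΔf₁⟩ := IH m' (by omega) (j+1) (by omega) _ hΔw
      obtain ⟨c, hc, hcomm⟩ := comm_pow n q p hn j (m'+2) w hw
      refine ⟨(c:ℂ)⁻¹ • ((R2 n)^(j+1) * w - f₁), ?_, ?_⟩
      · refine Submodule.smul_mem _ _ (Submodule.sub_mem _ ?_ hf₁)
        have h1 := R2_pow_mul_mem n q p (j+1) hw
        rw [show (m'+2) + 2*(j+1) = k + 2 from by omega] at h1
        exact h1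
      · rw [map_smul, map_sub, hcomm, hΔf₁, add_sub_cancel_right,
          ← Nat.cast_smul_eq_nsmul ℂ c, smul_smul,
          inv_mul_cancel₀ (Nat.cast_ne_zero.mpr hc.ne'), one_smul]

lemma delta_surj (hn : 0 < n) (k : ℕ) {g : MvPolynomial (Fin n ⊕ Fin n) ℂ}
    (hg : g ∈ Vspace n q p k) : ∃ f ∈ Vspace n q p (k+2), cxLaplacian n f = g := by
  obtain ⟨f, hf, hΔ⟩ := surj_aux n q p hn k k 0 (by omega) g hg
  exact ⟨f, hf, by simpa using hΔ⟩


instance finiteDim (k : ℕ) : FiniteDimensional ℂ (Vspace n q p k) := by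
  rw [Vspace_eq_span]
  exact FiniteDimensional.span_of_finite ℂ ((goodSet_finite n q p k).image _)

lemma finrank_inf_ker (hn : 0 < n) (k : ℕ) :
    Module.finrank ℂ ↥(Vspace n q p (k+2) ⊓ LinearMap.ker (cxLaplacian n))
      + Module.finrank ℂ (Vspace n q p k) = Module.finrank ℂ (Vspace n q p (k+2)) := by
  have hmap : ∀ x ∈ Vspace n q p (k+2), cxLaplacian n x ∈ Vspace n q p k :=
    fun x hx => delta_mem n q p k hx
  set Δ' := (cxLaplacian n).restrict hmap with hΔ'
  have hker : LinearMap.ker Δ' = Submodule.comap (Vspace n q p (k+2)).subtype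
      (Vspace n q p (k+2) ⊓ LinearMap.ker (cxLaplacian n)) := by
    ext x
    simp only [LinearMap.mem_ker, Submodule.mem_comap, Submodule.subtype_apply,
      Submodule.mem_inf]
    constructor
    · intro h
      exact ⟨x.2, by simpa [hΔ', LinearMap.restrict_apply, Subtype.ext_iff] using h⟩
    · intro h
      rw [Subtype.ext_iff]
      simpa [hΔ', LinearMap.restrict_apply] using h.2
  have hrange : LinearMap.range Δ' = ⊤ := by
    rw [Submodule.eq_top_iff']
    rintro ⟨y, hy⟩
    obtain ⟨f, hf, hΔf⟩ := delta_surj n q p hn k hy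
    exact ⟨⟨f, hf⟩, by simp [hΔ', LinearMap.restrict_apply, Subtype.ext_iff, hΔf]⟩
  have hrn := LinearMap.finrank_range_add_finrank_ker Δ'
  rw [hrange, finrank_top] at hrn
  have heq : Module.finrank ℂ (LinearMap.ker Δ')
      = Module.finrank ℂ ↥(Vspace n q p (k+2) ⊓ LinearMap.ker (cxLaplacian n)) := by
    rw [hker]
    exact LinearEquiv.finrank_eq (Submodule.comapSubtypeEquivOfLe inf_le_left)
  rw [heq] at hrn
  omega

lemma inf_ker_low {k : ℕ} (hk : k ≤ 1) :
    Vspace n q p k ⊓ LinearMap.ker (cxLaplacian n) = Vspace n q p k := by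
  refine le_antisymm inf_le_left (le_inf le_rfl fun x hx => ?_)
  exact LinearMap.mem_ker.mpr (delta_zero n q p hk hx)


def lSet (s : ℕ) : Set (Fin n → ℤ) :=
  {α : Fin n → ℤ | ((q : ℤ) ∣ ∑ j : Fin n, α j * p j) ∧ ∑ j : Fin n, (α j).natAbs = s}

def aSet (n k s : ℕ) : Set (Fin n → ℕ) := {m | s + 2 * ∑ j, m j = k}

lemma lSet_finite (s : ℕ) : (lSet n q p s).Finite := by
  have h1 : lSet n q p s ⊆ Set.univ.pi fun _ : Fin n => Set.Icc (-(s:ℤ)) (s:ℤ) := by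
    rintro α ⟨-, hα⟩ j -
    have h2 : (α j).natAbs ≤ s := hα ▸ Finset.single_le_sum
      (f := fun j => (α j).natAbs) (fun _ _ => Nat.zero_le _) (Finset.mem_univ j)
    simp only [Set.mem_Icc]
    omega
  exact Set.Finite.subset (Set.Finite.pi fun _ => Set.finite_Icc _ _) h1

lemma aSet_finite (n k s : ℕ) : (aSet n k s).Finite := by
  have h1 : aSet n k s ⊆ Set.univ.pi fun _ : Fin n => Set.Iic k := by
    rintro m hm j -
    have h2 : m j ≤ ∑ j', m j' := Finset.single_le_sum
      (f := fun j' => m j') (fun _ _ => Nat.zero_le _) (Finset.mem_univ j)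
    simp only [Set.mem_Iic]
    have h3 : s + 2 * ∑ j', m j' = k := hm
    omega
  exact Set.Finite.subset (Set.Finite.pi fun _ => Set.finite_Iic _) h1

lemma aSet_self (n k : ℕ) : aSet n k k = {fun _ => 0} := by
  ext m
  simp only [aSet, Set.mem_setOf_eq, Set.mem_singleton_iff]
  constructor
  · intro h
    have h2 : ∑ j, m j = 0 := by omega
    funext j
    exact Finset.sum_eq_zero_iff.mp h2 j (Finset.mem_univ j)
  · rintro rfl
    simp

lemma aSet_gt {n k s : ℕ} (h : k < s) : aSet n k s = ∅ := by
  ext m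
  simp only [aSet, Set.mem_setOf_eq, Set.mem_empty_iff_false, iff_false]
  omega


/-- the `ℓ¹`-norm of the difference vector of an exponent -/
def sfun (d : (Fin n ⊕ Fin n) →₀ ℕ) : ℕ :=
  ∑ j : Fin n, ((d (Sum.inl j) : ℤ) - (d (Sum.inr j) : ℤ)).natAbs

lemma sum_type_split (d : (Fin n ⊕ Fin n) →₀ ℕ) :
    ∑ t, d t = (∑ j, d (Sum.inl j)) + ∑ j, d (Sum.inr j) := by
  rw [Fintype.sum_sum_type]

lemma goodSet_card (k : ℕ) :
    (goodSet n q p k).ncard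
      = ∑ s ∈ Finset.range (k+1), (aSet n k s).ncard * (lSet n q p s).ncard := by
  classical
  rw [Set.ncard_eq_toFinset_card _ (goodSet_finite n q p k)]
  set G := (goodSet_finite n q p k).toFinset with hGdef
  have hGmem : ∀ d, d ∈ G ↔ d ∈ goodSet n q p k := fun d => Set.Finite.mem_toFinset _
  have hmem : ∀ d ∈ G, sfun n d ∈ Finset.range (k+1) := by
    intro d hd
    rw [Finset.mem_range]
    have hdeg : ∑ t, d t = k := ((hGmem d).mp hd).2
    rw [sum_type_split] at hdeg
    have h1 : sfun n d ≤ (∑ j, d (Sum.inl j)) + ∑ j, d (Sum.inr j) := by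
      rw [sfun, ← Finset.sum_add_distrib]
      refine Finset.sum_le_sum fun j _ => ?_
      omega
    omega
  rw [Finset.card_eq_sum_card_fiberwise hmem]
  refine Finset.sum_congr rfl fun s hs => ?_
  rw [Set.ncard_eq_toFinset_card _ (aSet_finite n k s),
    Set.ncard_eq_toFinset_card _ (lSet_finite n q p s), ← Finset.card_product]
  refine Finset.card_bij
    (fun d _ => (fun j => min (d (Sum.inl j)) (d (Sum.inr j)),
      fun j => (d (Sum.inl j) : ℤ) - (d (Sum.inr j) : ℤ))) ?_ ?_ ?_
  · -- maps into target
    intro d hd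
    rw [Finset.mem_filter] at hd
    obtain ⟨hdG, hds⟩ := hd
    obtain ⟨hdvd, hdeg⟩ := (hGmem d).mp hdG
    rw [Finset.mem_product]
    constructor
    · rw [Set.Finite.mem_toFinset]
      show s + 2 * ∑ j, min (d (Sum.inl j)) (d (Sum.inr j)) = k
      rw [← hds, sfun]
      rw [sum_type_split] at hdeg
      have key : (∑ j : Fin n, ((d (Sum.inl j) : ℤ) - (d (Sum.inr j) : ℤ)).natAbs)
          + 2 * ∑ j, min (d (Sum.inl j)) (d (Sum.inr j))
          = (∑ j, d (Sum.inl j)) + ∑ j, d (Sum.inr j) := by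
        rw [Finset.mul_sum, ← Finset.sum_add_distrib, ← Finset.sum_add_distrib]
        refine Finset.sum_congr rfl fun j _ => ?_
        omega
      omega
    · rw [Set.Finite.mem_toFinset]
      exact ⟨hdvd, hds⟩
  · -- injectivity
    intro d₁ h₁ d₂ h₂ heq
    have hmin := congrArg Prod.fst heq
    have hdiff := congrArg Prod.snd heq
    simp only at hmin hdiff
    ext t
    cases t with
    | inl j =>
      have e1 := congrFun hmin j
      have e2 := congrFun hdiff j
      omega
    | inr j =>
      have e1 := congrFun hmin j
      have e2 := congrFun hdiff j
      omega
  · -- surjectivity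
    rintro ⟨m, α⟩ hma
    rw [Finset.mem_product, Set.Finite.mem_toFinset, Set.Finite.mem_toFinset] at hma
    obtain ⟨hm, hα⟩ := hma
    have hm' : s + 2 * ∑ j, m j = k := hm
    obtain ⟨hαdvd, hαs⟩ := hα
    refine ⟨Finsupp.equivFunOnFinite.symm
      (Sum.elim (fun j => m j + (α j).toNat) (fun j => m j + (-α j).toNat)), ?_, ?_⟩
    · have happ : ∀ t, (Finsupp.equivFunOnFinite.symm
          (Sum.elim (fun j => m j + (α j).toNat) (fun j => m j + (-α j).toNat)) : _) t
          = Sum.elim (fun j => m j + (α j).toNat) (fun j => m j + (-α j).toNat) t :=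
        fun t => rfl
      rw [Finset.mem_filter]
      constructor
      · rw [hGmem]
        constructor
        · have hsame : (∑ j : Fin n,
              (((Finsupp.equivFunOnFinite.symm (Sum.elim (fun j => m j + (α j).toNat)
                (fun j => m j + (-α j).toNat)) : _) (Sum.inl j) : ℤ)
              - ((Finsupp.equivFunOnFinite.symm (Sum.elim (fun j => m j + (α j).toNat)
                (fun j => m j + (-α j).toNat)) : _) (Sum.inr j) : ℤ)) * p j)
              = ∑ j, α j * p j := by
            refine Finset.sum_congr rfl fun j _ => ?_
            rw [happ, happ]
            simp only [Sum.elim_inl, Sum.elim_inr]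
            have : ((m j + (α j).toNat : ℕ) : ℤ) - ((m j + (-α j).toNat : ℕ) : ℤ) = α j := by
              omega
            rw [this]
          rw [hsame]
          exact hαdvd
        · rw [sum_type_split]
          have h1 : (∑ j, (Finsupp.equivFunOnFinite.symm (Sum.elim (fun j => m j + (α j).toNat)
              (fun j => m j + (-α j).toNat)) : _) (Sum.inl j))
              + ∑ j, (Finsupp.equivFunOnFinite.symm (Sum.elim (fun j => m j + (α j).toNat)
              (fun j => m j + (-α j).toNat)) : _) (Sum.inr j)
              = ∑ j, ((m j + (α j).toNat) + (m j + (-α j).toNat)) := by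
            rw [← Finset.sum_add_distrib]
            refine Finset.sum_congr rfl fun j _ => ?_
            rw [happ, happ]
            rfl
          rw [h1]
          have h2 : ∑ j, ((m j + (α j).toNat) + (m j + (-α j).toNat))
              = (∑ j, (α j).natAbs) + 2 * ∑ j, m j := by
            rw [Finset.mul_sum, ← Finset.sum_add_distrib]
            refine Finset.sum_congr rfl fun j _ => ?_
            omega
          rw [h2, hαs]
          omega
      · show sfun n _ = s
        rw [sfun, ← hαs]
        refine Finset.sum_congr rfl fun j _ => ?_
        rw [happ, happ]
        simp only [Sum.elim_inl, Sum.elim_inr]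
        congr 1
        omega
    · have happ : ∀ t, (Finsupp.equivFunOnFinite.symm
          (Sum.elim (fun j => m j + (α j).toNat) (fun j => m j + (-α j).toNat)) : _) t
          = Sum.elim (fun j => m j + (α j).toNat) (fun j => m j + (-α j).toNat) t :=
        fun t => rfl
      refine Prod.ext ?_ ?_
      · funext j
        simp only
        rw [happ, happ]
        simp only [Sum.elim_inl, Sum.elim_inr]
        omega
      · funext j
        simp only
        rw [happ, happ]
        simp only [Sum.elim_inl, Sum.elim_inr]
        omega


lemma invH_eq (hq : 0 < q) (k : ℕ) :
    invariantHarmonics n q p k = Vspace n q p k ⊓ LinearMap.ker (cxLaplacian n) := by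
  rw [invariantHarmonics, inf_right_comm, homogInfKer n q p hq k]

lemma mult_low (hq : 0 < q) {k : ℕ} (hk : k ≤ 1) :
    Module.finrank ℂ (invariantHarmonics n q p k) = (goodSet n q p k).ncard := by
  rw [invH_eq n q p hq k, inf_ker_low n q p hk, finrank_Vspace]

lemma mult_rec (hn : 0 < n) (hq : 0 < q) (k : ℕ) :
    Module.finrank ℂ (invariantHarmonics n q p (k+2)) + (goodSet n q p k).ncard
      = (goodSet n q p (k+2)).ncard := by
  rw [invH_eq n q p hq (k+2), ← finrank_Vspace n q p k, ← finrank_Vspace n q p (k+2)]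
  exact finrank_inf_ker n q p hn k

lemma latticeCount_eq (s : ℕ) : latticeCount n q p s = (lSet n q p s).ncard := rfl

end LensAux

section Assembly

open LensAux

variable (n q₁ q₂ : ℕ) (p₁ p₂ : Fin n → ℤ)

lemma step1 (hn : 0 < n) (hq₁ : 0 < q₁) (hq₂ : 0 < q₂) :
    (∀ k : ℕ, Module.finrank ℂ ↥(invariantHarmonics n q₁ p₁ k)
        = Module.finrank ℂ ↥(invariantHarmonics n q₂ p₂ k))
      ↔ (∀ k : ℕ, (goodSet n q₁ p₁ k).ncard = (goodSet n q₂ p₂ k).ncard) := by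
  constructor
  · intro h k
    induction k using Nat.strong_induction_on with
    | _ k IH =>
      match k with
      | 0 => rw [← mult_low n q₁ p₁ hq₁ (by omega), ← mult_low n q₂ p₂ hq₂ (by omega), h 0]
      | 1 => rw [← mult_low n q₁ p₁ hq₁ (by omega), ← mult_low n q₂ p₂ hq₂ (by omega), h 1]
      | (k+2) =>
        have h1 := mult_rec n q₁ p₁ hn hq₁ k
        have h2 := mult_rec n q₂ p₂ hn hq₂ k
        have h3 := IH k (by omega)
        have h4 := h (k+2)
        omega
  · intro h k
    match k with
    | 0 => rw [mult_low n q₁ p₁ hq₁ (by omega), mult_low n q₂ p₂ hq₂ (by omega), h 0]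
    | 1 => rw [mult_low n q₁ p₁ hq₁ (by omega), mult_low n q₂ p₂ hq₂ (by omega), h 1]
    | (k+2) =>
      have h1 := mult_rec n q₁ p₁ hn hq₁ k
      have h2 := mult_rec n q₂ p₂ hn hq₂ k
      have h3 := h k
      have h4 := h (k+2)
      omega

lemma step2 :
    (∀ k : ℕ, (goodSet n q₁ p₁ k).ncard = (goodSet n q₂ p₂ k).ncard)
      ↔ (∀ s : ℕ, latticeCount n q₁ p₁ s = latticeCount n q₂ p₂ s) := by
  simp only [latticeCount_eq]
  constructor
  · intro h s
    induction s using Nat.strong_induction_on with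
    | _ s IH =>
      have h1 := h s
      rw [goodSet_card n q₁ p₁ s, goodSet_card n q₂ p₂ s, Finset.sum_range_succ,
        Finset.sum_range_succ] at h1
      have h2 : ∑ t ∈ Finset.range s, (aSet n s t).ncard * (lSet n q₁ p₁ t).ncard
          = ∑ t ∈ Finset.range s, (aSet n s t).ncard * (lSet n q₂ p₂ t).ncard := by
        refine Finset.sum_congr rfl fun t ht => ?_
        rw [IH t (Finset.mem_range.mp ht)]
      rw [h2, aSet_self, Set.ncard_singleton, one_mul, one_mul] at h1
      omega
  · intro h k
    rw [goodSet_card n q₁ p₁ k, goodSet_card n q₂ p₂ k]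
    exact Finset.sum_congr rfl fun s _ => by rw [h s]

end Assembly

/-- two lens spaces `L(q; p₁,…,pₙ)` and `L(q'; p'₁,…,p'ₙ)` are isospectral
(for every degree `k` the multiplicities, i.e. the dimensions of the spaces of invariant
harmonic homogeneous polynomials of degree `k`, coincide) if and only if their associated
congruence lattices satisfy `N_{L₁}(s) = N_{L₂}(s)` for all `s ∈ ℕ`. -/
theorem lens_spaces_isospectral_iff_lattice_counts_equal (n q₁ q₂ : ℕ)
    (hq₁ : 0 < q₁) (hq₂ : 0 < q₂) (p₁ p₂ : Fin n → ℤ)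
    (hp₁ : ∀ j, IsCoprime (p₁ j) (q₁ : ℤ)) (hp₂ : ∀ j, IsCoprime (p₂ j) (q₂ : ℤ)) :
    (∀ k : ℕ, Module.finrank ℂ ↥(invariantHarmonics n q₁ p₁ k)
        = Module.finrank ℂ ↥(invariantHarmonics n q₂ p₂ k))
      ↔ (∀ s : ℕ, latticeCount n q₁ p₁ s = latticeCount n q₂ p₂ s) := by
  by_cases hn : n = 0
  · subst hn
    refine iff_of_true ?_ ?_
    · intro k
      have hsub : lensSubst 0 q₁ p₁ = lensSubst 0 q₂ p₂ := by
        unfold lensSubst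
        congr 1
        funext t
        cases t with
        | inl j => exact j.elim0
        | inr j => exact j.elim0
      have heq : invariantHarmonics 0 q₁ p₁ k = invariantHarmonics 0 q₂ p₂ k := by
        unfold invariantHarmonics
        rw [hsub]
      rw [heq]
    · intro s
      unfold latticeCount
      congr 1
      ext α
      simp
  · rw [step1 n q₁ q₂ p₁ p₂ (Nat.pos_of_ne_zero hn) hq₁ hq₂]
    exact step2 n q₁ q₂ p₁ p₂
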